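/- Under the assumptions that f is lower bounded, ∇f is L_f-Lipschitz, L > L_f, and Σ_{k≥0}‖ε^k‖² < ∞, the inexact IHT iterates x^{k+1} = H_K(x^k - (1/L)(∇f(x^k)+ε^k)) satisfy lim_{k→∞} ‖x^k - x^{k+1}‖ = 0. -/

import Mathlib

noncomputable section

open scoped RealInnerProductSpace

/-- A vector is `K`-sparse if it has at most `K` nonzero entries. -/


lemma grad_cont {N : ℕ} (f : EuclideanSpace ℝ (Fin N) → ℝ) (Lf : ℝ)
    (hlip : ∀ x y, ‖gradient f x - gradient f y‖ ≤ Lf * ‖x - y‖) :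
    Continuous (gradient f) := by
  have h : LipschitzWith (Real.toNNReal Lf) (gradient f) := by
    apply LipschitzWith.of_dist_le_mul
    intro p q
    rw [dist_eq_norm, dist_eq_norm]
    calc ‖gradient f p - gradient f q‖ ≤ Lf * ‖p - q‖ := hlip p q
      _ ≤ (Real.toNNReal Lf : ℝ) * ‖p - q‖ :=
        mul_le_mul_of_nonneg_right (Real.le_coe_toNNReal Lf) (norm_nonneg _)
  exact h.continuous

lemma descent {N : ℕ} (f : EuclideanSpace ℝ (Fin N) → ℝ) (Lf : ℝ)
    (hf : ContDiff ℝ 1 f)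
    (hlip : ∀ x y, ‖gradient f x - gradient f y‖ ≤ Lf * ‖x - y‖)
    (a b : EuclideanSpace ℝ (Fin N)) :
    f b ≤ f a + ⟪gradient f a, b - a⟫ + Lf / 2 * ‖b - a‖ ^ 2 := by
  set d := b - a with hd
  set φ' : ℝ → ℝ := fun t => ⟪gradient f (a + t • d), d⟫ with hφ'
  have hγ : ∀ t : ℝ, HasDerivAt (fun s : ℝ => a + s • d) d t := by
    intro t
    simpa using (((hasDerivAt_id t).smul_const d).const_add a)
  have hφ : ∀ t : ℝ, HasDerivAt (fun s : ℝ => f (a + s • d)) (φ' t) t := by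
    intro t
    have h1 := ((hf.differentiable one_ne_zero) (a + t • d)).hasGradientAt
    have h2 := hasGradientAt_iff_hasFDerivAt.mp h1
    have h3 := h2.comp_hasDerivAt t (hγ t)
    have h4 : HasDerivAt (fun s : ℝ => f (a + s • d)) ((InnerProductSpace.toDual ℝ _ (gradient f (a + t • d))) d) t := h3
    rw [InnerProductSpace.toDual_apply_apply] at h4
    exact h4
  have hgc := grad_cont f Lf hlip
  have hφ'c : Continuous φ' := by
    apply Continuous.inner
    · exact hgc.comp (continuous_const.add (continuous_id.smul continuous_const))
    · exact continuous_const
  have hFTC : ∫ t in (0:ℝ)..1, φ' t = f b - f a := by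
    have := intervalIntegral.integral_eq_sub_of_hasDerivAt
      (f := fun s : ℝ => f (a + s • d)) (fun t _ => hφ t) (hφ'c.intervalIntegrable 0 1)
    simpa [hd] using this
  have hmono : ∫ t in (0:ℝ)..1, φ' t ≤
      ∫ t in (0:ℝ)..1, (⟪gradient f a, d⟫ + (Lf * ‖d‖ ^ 2) * t) := by
    apply intervalIntegral.integral_mono_on zero_le_one (hφ'c.intervalIntegrable 0 1)
      ((by fun_prop : Continuous fun t : ℝ => ⟪gradient f a, d⟫ + (Lf * ‖d‖ ^ 2) * t).intervalIntegrable 0 1)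
    intro t ht
    have h1 : φ' t - ⟪gradient f a, d⟫ = ⟪gradient f (a + t • d) - gradient f a, d⟫ := by
      rw [inner_sub_left]
    have h2 : ⟪gradient f (a + t • d) - gradient f a, d⟫ ≤ Lf * ‖d‖ ^ 2 * t := by
      calc ⟪gradient f (a + t • d) - gradient f a, d⟫
          ≤ ‖gradient f (a + t • d) - gradient f a‖ * ‖d‖ := real_inner_le_norm _ _
        _ ≤ (Lf * ‖a + t • d - a‖) * ‖d‖ :=
            mul_le_mul_of_nonneg_right (hlip _ _) (norm_nonneg _)
        _ = Lf * ‖d‖ ^ 2 * t := by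
            rw [add_sub_cancel_left, norm_smul, Real.norm_eq_abs, abs_of_nonneg ht.1]
            ring
    linarith [h1 ▸ h2]
  have hR : ∫ t in (0:ℝ)..1, (⟪gradient f a, d⟫ + (Lf * ‖d‖ ^ 2) * t) =
      ⟪gradient f a, d⟫ + Lf / 2 * ‖d‖ ^ 2 := by
    rw [intervalIntegral.integral_add intervalIntegrable_const
      ((by fun_prop : Continuous fun t : ℝ => (Lf * ‖d‖ ^ 2) * t).intervalIntegrable 0 1),
      intervalIntegral.integral_const, intervalIntegral.integral_const_mul, integral_id]
    simp
    ring
  linarith [hFTC ▸ hmono, hR ▸ hmono]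

def sparse {N : ℕ} (K : ℕ) (x : EuclideanSpace ℝ (Fin N)) : Prop :=
  (Finset.univ.filter fun i => x i ≠ 0).card ≤ K

/-- `IsHT K z x` means `x` is a result of hard thresholding `z`: a `K`-sparse vector
closest to `z` (ties broken arbitrarily). -/
def IsHT {N : ℕ} (K : ℕ) (z x : EuclideanSpace ℝ (Fin N)) : Prop :=
  sparse K x ∧ ∀ v : EuclideanSpace ℝ (Fin N), sparse K v → ‖x - z‖ ≤ ‖v - z‖

/-- Vanishing successive differences for inexact IHT: if `f` is lower bounded, `∇f` is
`L_f`-Lipschitz, `L > L_f`, and the errors are square-summable, then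
`‖x^k - x^{k+1}‖ → 0`. -/
theorem stmt5 {N : ℕ} (K : ℕ) (f : EuclideanSpace ℝ (Fin N) → ℝ) (Lf L : ℝ)
    (hf : ContDiff ℝ 1 f)
    (hbelow : ∃ B, ∀ y, B ≤ f y)
    (hlip : ∀ x y, ‖gradient f x - gradient f y‖ ≤ Lf * ‖x - y‖)
    (hL : Lf < L)
    (x ε : ℕ → EuclideanSpace ℝ (Fin N))
    (h0 : sparse K (x 0))
    (hit : ∀ k, IsHT K (x k - (1 / L) • (gradient f (x k) + ε k)) (x (k + 1)))
    (hsum : Summable fun k => ‖ε k‖ ^ 2) :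
    Filter.Tendsto (fun k => ‖x k - x (k + 1)‖) Filter.atTop (nhds 0) := by
  rcases Nat.eq_zero_or_pos N with hN | hN
  · subst hN
    have hz : ∀ k, ‖x k - x (k + 1)‖ = 0 := fun k => by
      rw [Subsingleton.elim (x k - x (k + 1)) 0, norm_zero]
    simpa [hz] using (tendsto_const_nhds : Filter.Tendsto (fun _ : ℕ => (0:ℝ)) Filter.atTop (nhds 0))
  -- L > 0
  have hLf0 : 0 ≤ Lf := by
    have h := hlip (EuclideanSpace.single ⟨0, hN⟩ (1:ℝ)) 0
    rw [sub_zero, EuclideanSpace.norm_single] at h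
    simpa using (norm_nonneg _).trans h
  have hL0 : 0 < L := lt_of_le_of_lt hLf0 hL
  set c : ℝ := (L - Lf) / 2 with hc
  have hc0 : 0 < c := by rw [hc]; linarith
  obtain ⟨B, hB⟩ := hbelow
  -- sparsity of iterates
  have hsp : ∀ k, sparse K (x k) := by
    intro k
    cases k with
    | zero => exact h0
    | succ n => exact (hit n).1
  set d : ℕ → EuclideanSpace ℝ (Fin N) := fun k => x (k + 1) - x k with hdd
  -- key inner product bound
  have hkey : ∀ k, ⟪d k, gradient f (x k) + ε k⟫ ≤ -(L / 2) * ‖d k‖ ^ 2 := by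
    intro k
    have h1 := (hit k).2 (x k) (hsp k)
    have e1 : x (k + 1) - (x k - (1 / L) • (gradient f (x k) + ε k)) =
        d k + (1 / L) • (gradient f (x k) + ε k) := by
      rw [hdd]; exact (sub_sub_eq_add_sub _ _ _).trans (add_sub_right_comm _ _ _)
    have e2 : x k - (x k - (1 / L) • (gradient f (x k) + ε k)) =
        (1 / L) • (gradient f (x k) + ε k) := by abel
    rw [e1, e2] at h1
    have h2 : ‖d k + (1 / L) • (gradient f (x k) + ε k)‖ ^ 2 ≤
        ‖(1 / L) • (gradient f (x k) + ε k)‖ ^ 2 :=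
      pow_le_pow_left₀ (norm_nonneg _) h1 2
    rw [norm_add_sq_real] at h2
    have h3 : ⟪d k, (1 / L) • (gradient f (x k) + ε k)⟫ ≤ -(‖d k‖ ^ 2 / 2) := by
      nlinarith [sq_nonneg ‖d k‖]
    rw [real_inner_smul_right] at h3
    have h4 : (1 / L) * ⟪d k, gradient f (x k) + ε k⟫ ≤ -(‖d k‖ ^ 2 / 2) := h3
    have := mul_le_mul_of_nonneg_left h4 (le_of_lt hL0)
    rw [← mul_assoc, mul_one_div, div_self (ne_of_gt hL0), one_mul] at this
    nlinarith
  -- descent inequality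
  have hdec : ∀ k, c / 2 * ‖d k‖ ^ 2 ≤ f (x k) - f (x (k + 1)) + 1 / (2 * c) * ‖ε k‖ ^ 2 := by
    intro k
    have hdes := descent f Lf hf hlip (x k) (x (k + 1))
    have hg : ⟪gradient f (x k), d k⟫ = ⟪d k, gradient f (x k) + ε k⟫ - ⟪ε k, d k⟫ := by
      rw [inner_add_right, real_inner_comm (d k) (gradient f (x k)), real_inner_comm (d k) (ε k)]
      ring
    have hcs : ⟪ε k, d k⟫ ≤ ‖ε k‖ * ‖d k‖ := real_inner_le_norm _ _
    have hub : ‖ε k‖ * ‖d k‖ ≤ c / 2 * ‖d k‖ ^ 2 + 1 / (2 * c) * ‖ε k‖ ^ 2 := by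
      have e : 2 * c * (c / 2 * ‖d k‖ ^ 2 + 1 / (2 * c) * ‖ε k‖ ^ 2) =
          c ^ 2 * ‖d k‖ ^ 2 + ‖ε k‖ ^ 2 := by field_simp
      have h2 : 2 * c * (‖ε k‖ * ‖d k‖) ≤ c ^ 2 * ‖d k‖ ^ 2 + ‖ε k‖ ^ 2 := by
        nlinarith [sq_nonneg (c * ‖d k‖ - ‖ε k‖)]
      exact le_of_mul_le_mul_left (by rw [e]; exact h2) (by positivity)
    have hk := hkey k
    have hinner : ⟪gradient f (x k), x (k + 1) - x k⟫ = ⟪gradient f (x k), d k⟫ := rfl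
    have hgd : ⟪gradient f (x k), d k⟫ ≤ -(L / 2) * ‖d k‖ ^ 2 + ‖ε k‖ * ‖d k‖ := by
      rw [hg]
      have : -⟪ε k, d k⟫ ≤ ‖ε k‖ * ‖d k‖ := by
        have := real_inner_le_norm (ε k) (-(d k))
        simpa [inner_neg_right] using this
      linarith
    rw [hinner] at hdes
    have hnd : ‖x (k + 1) - x k‖ = ‖d k‖ := rfl
    rw [hnd] at hdes
    nlinarith
  -- summability of ‖d k‖²
  have hsq : Summable fun k => ‖d k‖ ^ 2 := by
    set S := ∑' k, ‖ε k‖ ^ 2 with hS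
    have hnn : ∀ k, 0 ≤ ‖d k‖ ^ 2 := fun k => sq_nonneg _
    apply summable_of_sum_range_le hnn (c := 2 / c * (f (x 0) - B + 1 / (2 * c) * S))
    intro n
    have h1 : ∑ k ∈ Finset.range n, (c / 2 * ‖d k‖ ^ 2) ≤
        ∑ k ∈ Finset.range n, (f (x k) - f (x (k + 1)) + 1 / (2 * c) * ‖ε k‖ ^ 2) :=
      Finset.sum_le_sum fun k _ => hdec k
    rw [Finset.sum_add_distrib, Finset.sum_range_sub' (fun k => f (x k)) n] at h1
    have h2 : ∑ k ∈ Finset.range n, (1 / (2 * c) * ‖ε k‖ ^ 2) ≤ 1 / (2 * c) * S := by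
      rw [← Finset.mul_sum]
      apply mul_le_mul_of_nonneg_left _ (by positivity)
      exact Summable.sum_le_tsum _ (fun k _ => sq_nonneg _) hsum
    have h3 : B ≤ f (x n) := hB (x n)
    rw [← Finset.mul_sum] at h1
    have h4 : c / 2 * ∑ k ∈ Finset.range n, ‖d k‖ ^ 2 ≤
        f (x 0) - B + 1 / (2 * c) * S := by linarith
    have h5 := mul_le_mul_of_nonneg_left h4 (by positivity : (0:ℝ) ≤ 2 / c)
    have e5 : 2 / c * (c / 2 * ∑ k ∈ Finset.range n, ‖d k‖ ^ 2) =
        ∑ k ∈ Finset.range n, ‖d k‖ ^ 2 := by field_simp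
    rw [e5] at h5
    exact h5
  have h0' := hsq.tendsto_atTop_zero
  have hsqrt := (Real.continuous_sqrt.tendsto 0).comp h0'
  have ht : Filter.Tendsto (fun k => ‖d k‖) Filter.atTop (nhds 0) := by
    have e : ((fun s => Real.sqrt s) ∘ fun k => ‖d k‖ ^ 2) = fun k => ‖d k‖ := by
      funext k; simp [Function.comp, Real.sqrt_sq (norm_nonneg (d k))]
    rw [Real.sqrt_zero] at hsqrt
    rwa [e] at hsqrt
  have e2 : (fun k => ‖x k - x (k + 1)‖) = fun k => ‖d k‖ :=
    funext fun k => norm_sub_rev _ _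
  rwa [e2]
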